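/- Let p be a prime number, k ≥ 1 a natural number, and m ≥ 1. Suppose b_1, …, b_m are natural numbers with b_1 + ⋯ + b_m = p^k such that no b_i equals p^k (equivalently, every b_i < p^k). Then p divides the multinomial coefficient p^k! / (b_1! · b_2! ⋯ b_m!). -/

import Mathlib

/-- Let `p` be a prime, `k ≥ 1`, `m ≥ 1`, and `b_1, …, b_m` natural numbers with
`b_1 + ⋯ + b_m = p ^ k` such that every `b_i < p ^ k`.  Then `p` divides the
multinomial coefficient `(p ^ k)! / (b_1! ⋯ b_m!)`. -/
theorem multinomial_prime_pow_dvd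
    (p k m : ℕ) (hp : p.Prime) (hk : 1 ≤ k) (hm : 1 ≤ m)
    (b : Fin m → ℕ) (hsum : ∑ i, b i = p ^ k) (hlt : ∀ i, b i < p ^ k) :
    p ∣ Nat.multinomial Finset.univ b := by
  have hpos : 0 < p ^ k := Nat.pow_pos hp.pos
  have : ∃ i : Fin m, b i ≠ 0 := by
    by_contra h
    push_neg at h
    simp [h] at hsum
    omega
  obtain ⟨i, hi⟩ := this
  have hins : Finset.univ = insert i ((Finset.univ : Finset (Fin m)).erase i) := by
    rw [Finset.insert_erase (Finset.mem_univ i)]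
  rw [hins, Nat.multinomial_insert (Finset.notMem_erase i _)]
  have hsum' : b i + ((Finset.univ : Finset (Fin m)).erase i).sum b = p ^ k := by
    rw [Finset.add_sum_erase _ _ (Finset.mem_univ i), hsum]
  rw [hsum']
  exact Dvd.dvd.mul_right
    (Nat.Prime.dvd_choose_pow hp hi (hlt i).ne) _
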